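/- arXiv:0802.2696 — 4 statements merged into one kernel-verified Lean document; each statement's English description precedes it below -/
import Mathlib

section
/- For a cobweb poset Π designated by a sequence F with F₀ = 1, and any element x of rank k ≥ 1, the Möbius function value μ(0̂, x) from the minimal element 0̂ = ⟨1,0⟩ to x equals (-1)^k · ∏_{i=1}^{k-1} (F_i - 1). -/
/-- The cobweb order relation on pairs `(j, s)` where `s` is the level:
`⟨j,s⟩ ≤ ⟨q,u⟩` iff `s < u` or (`s = u` and `j = q`). -/
def cobwebLE (p q : ℕ × ℕ) : Prop :=
  p.2 < q.2 ∨ (p.2 = q.2 ∧ p.1 = q.1)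

/-- Vertices of the cobweb poset designated by `F`: pairs `(j, s)` with `1 ≤ j ≤ F s`. -/
def CobwebVertex (F : ℕ → ℕ) : Type :=
  {p : ℕ × ℕ // 1 ≤ p.1 ∧ p.1 ≤ F p.2}

instance (F : ℕ → ℕ) : PartialOrder (CobwebVertex F) where
  le x y := cobwebLE x.val y.val
  le_refl x := Or.inr ⟨rfl, rfl⟩
  le_trans x y z hxy hyz := by
    rcases hxy with h | ⟨h1, h2⟩
    · rcases hyz with h' | ⟨h1', h2'⟩
      · exact Or.inl (h.trans h')
      · exact Or.inl (h1' ▸ h)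
    · rcases hyz with h' | ⟨h1', h2'⟩
      · exact Or.inl (h1 ▸ h')
      · exact Or.inr ⟨h1.trans h1', h2.trans h2'⟩
  le_antisymm x y hxy hyx := by
    rcases hxy with h | ⟨h1, h2⟩
    · rcases hyx with h' | ⟨h1', h2'⟩
      · exact absurd (h.trans h') (lt_irrefl _)
      · exact absurd (h1' ▸ h) (lt_irrefl _)
    · rcases hyx with h' | ⟨h1', h2'⟩
      · exact absurd (h1 ▸ h') (lt_irrefl _)
      · exact Subtype.ext (Prod.ext h2 h1)

/-- The rank of a vertex is its level. -/
def rank {F : ℕ → ℕ} (x : CobwebVertex F) : ℕ := x.val.2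

lemma cobweb_le_iff {F : ℕ → ℕ} (a b : CobwebVertex F) :
    a ≤ b ↔ (a.val.2 < b.val.2 ∨ (a.val.2 = b.val.2 ∧ a.val.1 = b.val.1)) := Iff.rfl

lemma cobweb_rec (F : ℕ → ℕ) (k : ℕ) :
    1 + ∑ s ∈ Finset.Icc 1 k, (F s : ℤ) * ((-1)^s * ∏ i ∈ Finset.Icc 1 (s-1), ((F i : ℤ) - 1))
      = -((-1)^(k+1) * ∏ i ∈ Finset.Icc 1 k, ((F i : ℤ) - 1)) := by
  induction k with
  | zero => simp
  | succ n ih =>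
    rw [Finset.sum_Icc_succ_top (by omega), Finset.prod_Icc_succ_top (by omega)]
    simp only [Nat.add_sub_cancel]
    linear_combination ih

theorem cobweb_mobius_formula (F : ℕ → ℕ) (hF0 : F 0 = 1)
    (μ : CobwebVertex F → CobwebVertex F → ℤ)
    (zero : CobwebVertex F) (hzero : zero.val = (1, 0))
    (hμ_refl : ∀ x : CobwebVertex F, μ x x = 1)
    (hμ_sum : ∀ x y : CobwebVertex F, x < y → ∑ᶠ z ∈ Set.Icc x y, μ x z = 0)
    (x : CobwebVertex F) (k : ℕ) (hk : 1 ≤ k) (hr : rank x = k) :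
    μ zero x = (-1 : ℤ) ^ k * ∏ i ∈ Finset.Icc 1 (k - 1), ((F i : ℤ) - 1) := by
  classical
  induction k using Nat.strong_induction_on generalizing x with
  | _ k IH =>
  -- zero ≤ everything
  have hzero2 : zero.val.2 = 0 := by rw [hzero]
  have hzle : ∀ z : CobwebVertex F, zero ≤ z := by
    intro z
    rcases Nat.eq_zero_or_pos z.val.2 with h0 | hp
    · refine Or.inr ⟨by omega, ?_⟩
      have := z.property
      rw [h0, hF0] at this
      rw [hzero]
      omega
    · exact Or.inl (by omega)
  have hzx : zero < x := by
    refine lt_of_le_of_ne (hzle x) ?_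
    intro h
    have : zero.val.2 = x.val.2 := by rw [h]
    rw [hzero2] at this
    simp only [rank] at hr
    omega
  -- the level finsets
  set levS : ℕ → Finset (CobwebVertex F) := fun s =>
    (Finset.Icc 1 (F s)).attach.map
      ⟨fun j => ⟨(j.1, s), ⟨(Finset.mem_Icc.mp j.2).1, (Finset.mem_Icc.mp j.2).2⟩⟩,
       fun a b h => Subtype.ext (by simpa using congrArg (fun z => z.val.1) h)⟩ with hlevS
  have hmemlev : ∀ (s : ℕ) (z : CobwebVertex F), z ∈ levS s ↔ z.val.2 = s := by
    intro s z
    constructor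
    · intro hz
      simp only [hlevS, Finset.mem_map, Function.Embedding.coeFn_mk] at hz
      obtain ⟨j, _, rfl⟩ := hz
      rfl
    · intro h
      simp only [hlevS, Finset.mem_map, Function.Embedding.coeFn_mk]
      refine ⟨⟨z.val.1, Finset.mem_Icc.mpr ⟨z.property.1, h ▸ z.property.2⟩⟩,
        Finset.mem_attach _ _, ?_⟩
      exact Subtype.ext (Prod.ext rfl h.symm)
  set S : Finset (CobwebVertex F) := (Finset.range k).biUnion levS ∪ {x} with hS
  have hIcc : Set.Icc zero x = ↑S := by
    ext z
    simp only [Set.mem_Icc, hS, Finset.coe_union, Finset.coe_biUnion, Finset.coe_singleton,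
      Set.mem_union, Set.mem_iUnion, Finset.mem_coe, Finset.mem_range, Set.mem_singleton_iff]
    constructor
    · rintro ⟨-, hzx2⟩
      rcases hzx2 with h | ⟨h1, h2⟩
      · exact Or.inl ⟨z.val.2, by simp only [rank] at hr; omega, (hmemlev _ _).mpr rfl⟩
      · exact Or.inr (Subtype.ext (Prod.ext h2 h1))
    · rintro (⟨s, hs, hz⟩ | rfl)
      · have := (hmemlev _ _).mp hz
        refine ⟨hzle z, Or.inl ?_⟩
        simp only [rank] at hr
        omega
      · exact ⟨hzle z, le_refl z⟩
  have hsum := hμ_sum zero x hzx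
  rw [hIcc, finsum_mem_coe_finset] at hsum
  -- x ∉ biUnion
  have hxnot : x ∉ (Finset.range k).biUnion levS := by
    intro h
    rw [Finset.mem_biUnion] at h
    obtain ⟨s, hs, hz⟩ := h
    have := (hmemlev _ _).mp hz
    simp only [rank] at hr
    rw [Finset.mem_range] at hs
    omega
  rw [hS, Finset.sum_union (Finset.disjoint_singleton_right.mpr hxnot),
    Finset.sum_singleton] at hsum
  rw [Finset.sum_biUnion (by
    intro a _ b _ hab
    simp only [Finset.disjoint_left]
    intro z hza hzb
    exact hab (((hmemlev a z).mp hza) ▸ (hmemlev b z).mp hzb))] at hsum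
  -- each level sum
  have hlev : ∀ s ∈ Finset.range k, ∑ z ∈ levS s, μ zero z
      = (F s : ℤ) * ((-1)^s * ∏ i ∈ Finset.Icc 1 (s-1), ((F i : ℤ) - 1)) := by
    intro s hs
    rw [Finset.mem_range] at hs
    have hval : ∀ z ∈ levS s, μ zero z = (-1 : ℤ)^s * ∏ i ∈ Finset.Icc 1 (s-1), ((F i : ℤ) - 1) := by
      intro z hz
      have h2 := (hmemlev s z).mp hz
      rcases Nat.eq_zero_or_pos s with rfl | hp
      · have : z = zero := by
          refine Subtype.ext (Prod.ext ?_ (by rw [hzero]; exact h2))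
          have := z.property
          rw [h2, hF0] at this
          rw [hzero]
          omega
        rw [this, hμ_refl]
        simp
      · exact IH s hs z hp h2
    rw [Finset.sum_congr rfl hval, Finset.sum_const]
    simp only [hlevS, Finset.card_map, Finset.card_attach, Nat.card_Icc,
      Nat.add_sub_cancel, nsmul_eq_mul]
  rw [Finset.sum_congr rfl hlev] at hsum
  -- split off s = 0
  have hsplit : ∑ s ∈ Finset.range k,
      (F s : ℤ) * ((-1)^s * ∏ i ∈ Finset.Icc 1 (s-1), ((F i : ℤ) - 1))
      = 1 + ∑ s ∈ Finset.Icc 1 (k-1),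
        (F s : ℤ) * ((-1)^s * ∏ i ∈ Finset.Icc 1 (s-1), ((F i : ℤ) - 1)) := by
    rw [Finset.range_eq_Ico, ← Finset.sum_Ico_consecutive _ (by omega : 0 ≤ 1) (by omega : 1 ≤ k)]
    have h2 : Finset.Ico 1 k = Finset.Icc 1 (k-1) := by
      rw [← Finset.Ico_add_one_right_eq_Icc]
      congr 1
      omega
    rw [h2]
    congr 1
    simp [hF0]
  rw [hsplit] at hsum
  have := cobweb_rec F (k-1)
  rw [show k - 1 + 1 = k by omega] at this
  linarith [hsum, this]
end

section
/- For a cobweb poset Π designated by a sequence F with F₀ = 1, the value μ(0̂, x) depends only on the rank of x; that is, if x and y are elements of Π with r(x) = r(y), then μ(0̂, x) = μ(0̂, y). -/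
theorem cobweb_mobius_rank_invariant (F : ℕ → ℕ) (hF0 : F 0 = 1)
    (μ : CobwebVertex F → CobwebVertex F → ℤ)
    (zero : CobwebVertex F) (hzero : zero.val = (1, 0))
    (hμ_refl : ∀ x : CobwebVertex F, μ x x = 1)
    (hμ_sum : ∀ x y : CobwebVertex F, x < y → ∑ᶠ z ∈ Set.Icc x y, μ x z = 0)
    (x y : CobwebVertex F) (h : rank x = rank y) :
    μ zero x = μ zero y := by
  -- any vertex of rank 0 is zero
  have hrank0 : ∀ w : CobwebVertex F, rank w = 0 → w = zero := by
    intro w hw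
    have hw2 : w.val.2 = 0 := hw
    have h1 : w.val.1 ≤ F 0 := by
      have := w.property.2
      rwa [hw2] at this
    have h2 : w.val.1 = 1 := le_antisymm (by omega) w.property.1
    apply Subtype.ext
    rw [hzero]
    exact Prod.ext h2 hw2
  rcases Nat.eq_zero_or_pos (rank x) with hs | hs
  · rw [hrank0 x hs, hrank0 y (h ▸ hs)]
  · set s := rank x with hsdef
    set T : Set (CobwebVertex F) := {z | rank z < s} with hT
    -- T is finite
    have hTfin : T.Finite := by
      set N : ℕ := Finset.sup (Finset.range s) F with hN
      have : T ⊆ Subtype.val ⁻¹' (Set.Icc 1 N ×ˢ Set.Iio s) := by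
        intro z hz
        have hz2 : z.val.2 < s := hz
        have hFle : F z.val.2 ≤ N := Finset.le_sup (Finset.mem_range.mpr hz2)
        exact ⟨⟨z.property.1, le_trans z.property.2 hFle⟩, hz2⟩
      exact Set.Finite.subset
        (Set.Finite.preimage Subtype.val_injective.injOn
          ((Set.finite_Icc _ _).prod (Set.finite_Iio _))) this
    have key : ∀ w : CobwebVertex F, rank w = s → μ zero w = - ∑ᶠ z ∈ T, μ zero z := by
      intro w hw
      have hw2 : w.val.2 = s := hw
      have hzerole : ∀ z : CobwebVertex F, zero ≤ z := by
        intro z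
        rcases Nat.eq_zero_or_pos (rank z) with h0 | h0
        · rw [hrank0 z h0]
        · left
          rw [hzero]
          exact h0
      have hIcc : Set.Icc zero w = T ∪ {w} := by
        ext z
        constructor
        · rintro ⟨-, hzw⟩
          rcases hzw with hlt | ⟨heq, heq'⟩
          · exact Or.inl (show z.val.2 < s by omega)
          · exact Or.inr (Subtype.ext (Prod.ext heq' heq))
        · rintro (hz | hz)
          · have hz2 : z.val.2 < s := hz
            exact ⟨hzerole z, Or.inl (by omega)⟩
          · rw [Set.mem_singleton_iff] at hz
            rw [hz]
            exact ⟨hzerole w, le_refl w⟩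
      have hwT : w ∉ T := by simp [hT, rank, hw2]
      have hlt : zero < w := by
        refine lt_of_le_of_ne (hzerole w) ?_
        intro hzw
        have : rank zero = s := by rw [hzw, hw]
        simp [rank, hzero] at this
        omega
      have hsum := hμ_sum zero w hlt
      rw [hIcc, finsum_mem_union (by simpa using hwT) hTfin (Set.finite_singleton w),
        finsum_mem_singleton] at hsum
      linarith
    rw [key x rfl, key y h.symm]
end

section
/- For the cobweb poset Π designated by F with F₀ = 1, the k-th Whitney number of the first kind satisfies w_k(Π) = Σ_{x : r(x)=k} μ(0̂,x) = F_k · (-1)^k · ∏_{i=1}^{k-1} (F_i - 1) for k ≥ 1, and w_0(Π) = 1. -/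
namespace CobwebAux

lemma le_iff {F : ℕ → ℕ} (x y : CobwebVertex F) :
    x ≤ y ↔ (x.val.2 < y.val.2 ∨ (x.val.2 = y.val.2 ∧ x.val.1 = y.val.1)) := Iff.rfl

instance {F : ℕ → ℕ} : DecidableEq (CobwebVertex F) := fun a b =>
  decidable_of_iff (a.val = b.val) Subtype.ext_iff.symm

/-- The finset of vertices at level `s`. -/
def levelFinset (F : ℕ → ℕ) (s : ℕ) : Finset (CobwebVertex F) :=
  (Finset.Icc 1 (F s)).attach.map
    ⟨fun j => ⟨(j.1, s), by simpa using Finset.mem_Icc.mp j.2⟩,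
     by
       intro a b h
       apply Subtype.ext
       have h2 : ((a.1 : ℕ), s) = ((b.1 : ℕ), s) := congrArg Subtype.val h
       simpa [Prod.ext_iff] using h2⟩

lemma mem_levelFinset {F : ℕ → ℕ} {s : ℕ} {x : CobwebVertex F} :
    x ∈ levelFinset F s ↔ rank x = s := by
  constructor
  · intro hx
    simp only [levelFinset, Finset.mem_map, Finset.mem_attach, true_and,
      Function.Embedding.coeFn_mk] at hx
    obtain ⟨j, hj⟩ := hx
    rw [← hj]; rfl
  · intro hx
    simp only [levelFinset, Finset.mem_map, Finset.mem_attach, true_and,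
      Function.Embedding.coeFn_mk]
    refine ⟨⟨x.val.1, ?_⟩, ?_⟩
    · rw [Finset.mem_Icc]
      exact ⟨x.2.1, hx ▸ x.2.2⟩
    · apply Subtype.ext
      exact Prod.ext rfl hx.symm

lemma card_levelFinset (F : ℕ → ℕ) (s : ℕ) : (levelFinset F s).card = F s := by
  simp [levelFinset]

/-- The putative value of μ(0̂, x) at level k. -/
def M (F : ℕ → ℕ) (k : ℕ) : ℤ :=
  (-1) ^ k * ∏ i ∈ Finset.Icc 1 (k - 1), ((F i : ℤ) - 1)

lemma key (F : ℕ → ℕ) : ∀ n : ℕ,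
    1 + ∑ s ∈ Finset.Icc 1 n, (F s : ℤ) * M F s = - M F (n + 1) := by
  intro n
  induction n with
  | zero => simp [M]
  | succ n ih =>
    rw [Finset.sum_Icc_succ_top (by omega : 1 ≤ n + 1), ← add_assoc, ih]
    have h1 : M F (n + 2) = -((F (n+1) : ℤ) - 1) * M F (n + 1) := by
      simp only [M]
      rw [show n + 2 - 1 = (n + 1 - 1) + 1 by omega,
        Finset.prod_Icc_succ_top (by omega : 1 ≤ n + 1 - 1 + 1)]
      rw [show n + 1 - 1 + 1 = n + 1 by omega]
      ring
    rw [h1]; ring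


lemma mu_eq (F : ℕ → ℕ) (μ : CobwebVertex F → CobwebVertex F → ℤ)
    (zero : CobwebVertex F) (hzero : zero.val = (1, 0))
    (hμ_refl : ∀ x : CobwebVertex F, μ x x = 1)
    (hμ_sum : ∀ x y : CobwebVertex F, x < y → ∑ᶠ z ∈ Set.Icc x y, μ x z = 0) :
    ∀ k, 1 ≤ k → ∀ x : CobwebVertex F, rank x = k → μ zero x = M F k := by
  intro k
  induction k using Nat.strong_induction_on with
  | _ k ih =>
  intro hk x hx
  have hz2 : zero.val.2 = 0 := by rw [hzero]
  have hz1 : zero.val.1 = 1 := by rw [hzero]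
  have hx2 : x.val.2 = k := hx
  have hzx : zero < x := by
    apply lt_of_le_of_ne
    · exact Or.inl (by omega)
    · intro h
      have : zero.val.2 = x.val.2 := by rw [h]
      omega
  set B : Finset (CobwebVertex F) := (Finset.Icc 1 (k-1)).biUnion (levelFinset F) with hB
  have hmemB : ∀ z : CobwebVertex F, z ∈ B ↔ (1 ≤ z.val.2 ∧ z.val.2 ≤ k - 1) := by
    intro z
    simp only [hB, Finset.mem_biUnion, Finset.mem_Icc, mem_levelFinset]
    constructor
    · rintro ⟨s, ⟨h1, h2⟩, h3⟩
      have : z.val.2 = s := h3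
      omega
    · intro h
      exact ⟨z.val.2, by omega, rfl⟩
  have hxB : x ∉ B := by
    rw [hmemB]; omega
  have hzB : zero ∉ insert x B := by
    rw [Finset.mem_insert]
    rintro (h | h)
    · have : zero.val.2 = x.val.2 := by rw [h]
      omega
    · rw [hmemB] at h; omega
  have hIcc : Set.Icc zero x = ↑(insert zero (insert x B)) := by
    ext z
    simp only [Set.mem_Icc, Finset.coe_insert, Set.mem_insert_iff, Finset.mem_coe,
      Finset.mem_insert, hmemB]
    constructor
    · rintro ⟨h1, h2⟩
      rcases h1 with h1 | ⟨h1a, h1b⟩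
      · rcases h2 with h2 | ⟨h2a, h2b⟩
        · right; right; omega
        · right; left
          exact Subtype.ext (Prod.ext h2b h2a)
      · left
        exact (Subtype.ext (Prod.ext h1b h1a)).symm
    · rintro (rfl | rfl | h)
      · exact ⟨le_refl _, le_of_lt hzx⟩
      · exact ⟨le_of_lt hzx, le_refl _⟩
      · exact ⟨Or.inl (by omega), Or.inl (by omega)⟩
  have hsum := hμ_sum zero x hzx
  rw [hIcc, finsum_mem_coe_finset, Finset.sum_insert hzB, Finset.sum_insert hxB,
    hμ_refl] at hsum
  have hBsum : ∑ z ∈ B, μ zero z = ∑ s ∈ Finset.Icc 1 (k-1), (F s : ℤ) * M F s := by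
    rw [hB, Finset.sum_biUnion]
    · apply Finset.sum_congr rfl
      intro s hs
      rw [Finset.mem_Icc] at hs
      have hc : ∀ z ∈ levelFinset F s, μ zero z = M F s := fun z hz =>
        ih s (by omega) hs.1 z (mem_levelFinset.mp hz)
      rw [Finset.sum_congr rfl hc, Finset.sum_const, card_levelFinset, nsmul_eq_mul]
    · intro a _ b _ hab
      refine Finset.disjoint_left.mpr (fun z hza hzb => hab ?_)
      rw [← mem_levelFinset.mp hza, mem_levelFinset.mp hzb]
  rw [hBsum] at hsum
  have hkey := key F (k-1)
  rw [show k - 1 + 1 = k by omega] at hkey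
  linarith

end CobwebAux


open CobwebAux in
theorem cobweb_whitney_first_kind (F : ℕ → ℕ) (hF0 : F 0 = 1)
    (μ : CobwebVertex F → CobwebVertex F → ℤ)
    (zero : CobwebVertex F) (hzero : zero.val = (1, 0))
    (hμ_refl : ∀ x : CobwebVertex F, μ x x = 1)
    (hμ_sum : ∀ x y : CobwebVertex F, x < y → ∑ᶠ z ∈ Set.Icc x y, μ x z = 0)
    (k : ℕ) :
    (1 ≤ k → ∑ᶠ x ∈ {x : CobwebVertex F | rank x = k}, μ zero x =
      (F k : ℤ) * (-1 : ℤ) ^ k * ∏ i ∈ Finset.Icc 1 (k - 1), ((F i : ℤ) - 1)) ∧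
    (∑ᶠ x ∈ {x : CobwebVertex F | rank x = 0}, μ zero x = 1) := by
  have hset : ∀ s : ℕ, {x : CobwebVertex F | rank x = s} = ↑(levelFinset F s) := by
    intro s
    ext z
    simp [mem_levelFinset]
  constructor
  · intro hk
    rw [hset, finsum_mem_coe_finset]
    have hc : ∀ z ∈ levelFinset F k, μ zero z = M F k := fun z hz =>
      mu_eq F μ zero hzero hμ_refl hμ_sum k hk z (mem_levelFinset.mp hz)
    rw [Finset.sum_congr rfl hc, Finset.sum_const, card_levelFinset, nsmul_eq_mul, M]
    ring
  · rw [hset, finsum_mem_coe_finset]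
    have h1 : levelFinset F 0 = {zero} := by
      apply Finset.eq_singleton_iff_unique_mem.mpr
      constructor
      · rw [mem_levelFinset]
        show zero.val.2 = 0
        rw [hzero]
      · intro y hy
        rw [mem_levelFinset] at hy
        have hy2 : y.val.2 = 0 := hy
        have := y.2
        rw [hy2, hF0] at this
        apply Subtype.ext
        rw [hzero]
        exact Prod.ext (by omega) hy2
    rw [h1, Finset.sum_singleton, hμ_refl]
end

section
/- The characteristic polynomial of the finite cobweb subposet P_n is given explicitly by χ_n(t) = t^n + Σ_{k=1}^n (-1)^k F_k · (∏_{i=1}^{k-1} (F_i - 1)) · t^{n-k}. -/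
instance (F : ℕ → ℕ) : DecidableEq (CobwebVertex F) :=
  fun a b => decidable_of_iff (a.val = b.val) Subtype.ext_iff.symm

namespace Cobweb

variable (F : ℕ → ℕ)

/-- closed form for μ(0̂, x) with rank x = k -/
noncomputable def m (k : ℕ) : ℤ :=
  (-1)^k * ∏ i ∈ Finset.Icc 1 (k-1), ((F i : ℤ) - 1)

/-- vertices of rank s -/
def lvl (s : ℕ) : Finset (CobwebVertex F) :=
  (Finset.Icc 1 (F s)).attach.map
    ⟨fun j => ⟨(j.val, s), (Finset.mem_Icc.mp j.2).1, (Finset.mem_Icc.mp j.2).2⟩,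
     fun a b h => Subtype.ext (congrArg (fun x : CobwebVertex F => x.val.1) h)⟩

lemma mem_lvl {s : ℕ} {x : CobwebVertex F} : x ∈ lvl F s ↔ rank x = s := by
  constructor
  · intro hx
    simp only [lvl, Finset.mem_map, Finset.mem_attach] at hx
    obtain ⟨j, -, rfl⟩ := hx
    rfl
  · intro hx
    simp only [lvl, Finset.mem_map, Finset.mem_attach]
    refine ⟨⟨x.val.1, Finset.mem_Icc.mpr ⟨x.2.1, hx ▸ x.2.2⟩⟩, trivial, ?_⟩
    exact Subtype.ext (Prod.ext rfl hx.symm)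

lemma sum_const_lvl (s : ℕ) (c : ℤ) : ∑ _x ∈ lvl F s, c = (F s : ℤ) * c := by
  rw [Finset.sum_const, lvl, Finset.card_map, Finset.card_attach, Nat.card_Icc]
  simp [nsmul_eq_mul]

lemma disj_lvl {s u : ℕ} (h : s ≠ u) : Disjoint (lvl F s) (lvl F u) := by
  rw [Finset.disjoint_left]
  intro x hx hx'
  rw [mem_lvl] at hx hx'
  exact h (hx ▸ hx')

lemma m_succ (u : ℕ) (hu : 1 ≤ u) : m F (u+1) = -((F u : ℤ) - 1) * m F u := by
  obtain ⟨v, rfl⟩ := Nat.exists_eq_add_of_le hu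
  simp only [m, show 1 + v + 1 - 1 = 1 + v from rfl, show 1 + v - 1 = v by omega]
  rw [show 1 + v = v + 1 by omega, Finset.prod_Icc_succ_top (by omega), pow_succ]
  ring

lemma sum_m (hF0 : F 0 = 1) : ∀ u, 1 ≤ u →
    ∑ s ∈ Finset.range u, (F s : ℤ) * m F s = -(m F u) := by
  intro u hu
  induction u, hu using Nat.le_induction with
  | base => simp [m, hF0]
  | succ u hu ih =>
    rw [Finset.sum_range_succ, ih, m_succ F u hu]
    ring

end Cobweb

open Cobweb in
theorem cobweb_char_poly_explicit (F : ℕ → ℕ) (hF0 : F 0 = 1)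
    (μ : CobwebVertex F → CobwebVertex F → ℤ)
    (zero : CobwebVertex F) (hzero : zero.val = (1, 0))
    (hμ_refl : ∀ x : CobwebVertex F, μ x x = 1)
    (hμ_sum : ∀ x y : CobwebVertex F, x < y → ∑ᶠ z ∈ Set.Icc x y, μ x z = 0)
    (n : ℕ) (t : ℤ) :
    ∑ᶠ x ∈ {x : CobwebVertex F | rank x ≤ n}, μ zero x * t ^ (n - rank x) =
      t ^ n + ∑ k ∈ Finset.Icc 1 n,
        (-1 : ℤ) ^ k * (F k : ℤ) * (∏ i ∈ Finset.Icc 1 (k - 1), ((F i : ℤ) - 1)) * t ^ (n - k) := by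
  -- every rank-0 vertex is zero
  have hrank0 : ∀ x : CobwebVertex F, rank x = 0 → x = zero := by
    intro x hx
    have h2 : x.val.1 ≤ F 0 := by
      have h := x.2.2; rwa [show x.val.2 = 0 from hx] at h
    have h1 : x.val.1 = 1 := le_antisymm (by omega) x.2.1
    exact Subtype.ext (by rw [hzero]; exact Prod.ext h1 hx)
  have hzero_le : ∀ z : CobwebVertex F, zero ≤ z := by
    intro z
    rcases Nat.eq_zero_or_pos (rank z) with h | h
    · exact (hrank0 z h).ge
    · exact Or.inl (by rw [show zero.val.2 = 0 from congrArg Prod.snd hzero]; exact h)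
  -- key: μ zero x = m F (rank x)
  have key : ∀ u (x : CobwebVertex F), rank x = u → μ zero x = m F u := by
    intro u
    induction u using Nat.strong_induction_on with
    | _ u ih =>
      intro x hx
      rcases Nat.eq_zero_or_pos u with rfl | hu
      · rw [hrank0 x hx, hμ_refl]
        simp [m]
      · have hlt : zero < x := lt_of_le_of_ne (hzero_le x) (by
          intro h
          rw [← h] at hx
          have : rank zero = 0 := congrArg Prod.snd hzero
          omega)
        have hIcc : Set.Icc zero x =
            ↑((Finset.range u).biUnion (lvl F) ∪ {x}) := by
          ext z
          simp only [Set.mem_Icc, Finset.coe_union, Finset.coe_biUnion, Finset.coe_singleton,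
            Set.mem_union, Set.mem_iUnion, Finset.mem_coe, Finset.mem_range, mem_lvl,
            Set.mem_singleton_iff]
          constructor
          · rintro ⟨-, h | ⟨h1, h2⟩⟩
            · exact Or.inl ⟨rank z, hx ▸ h, rfl⟩
            · exact Or.inr (Subtype.ext (Prod.ext h2 h1))
          · rintro (⟨s, hs, rfl⟩ | rfl)
            · exact ⟨hzero_le z, Or.inl (lt_of_lt_of_eq hs hx.symm)⟩
            · exact ⟨hzero_le z, le_rfl⟩
        have hsum := hμ_sum zero x hlt
        rw [hIcc, finsum_mem_coe_finset, Finset.sum_union (by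
          rw [Finset.disjoint_right]
          intro z hz
          simp only [Finset.mem_singleton] at hz
          subst hz
          simp only [Finset.mem_biUnion, Finset.mem_range, mem_lvl]
          rintro ⟨s, hs, hs'⟩
          omega), Finset.sum_singleton] at hsum
        have hb : ∑ z ∈ (Finset.range u).biUnion (lvl F), μ zero z
            = ∑ s ∈ Finset.range u, (F s : ℤ) * m F s := by
          rw [Finset.sum_biUnion (fun s _ s' _ h => disj_lvl F h)]
          refine Finset.sum_congr rfl fun s hs => ?_
          rw [Finset.mem_range] at hs
          rw [← sum_const_lvl F s (m F s)]
          exact Finset.sum_congr rfl fun z hz => ih s hs z ((mem_lvl F).mp hz)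
        rw [hb, sum_m F hF0 u hu] at hsum
        linarith
  -- compute the main sum
  have hset : {x : CobwebVertex F | rank x ≤ n} =
      ↑((Finset.range (n+1)).biUnion (lvl F)) := by
    ext x
    simp only [Set.mem_setOf_eq, Finset.coe_biUnion, Set.mem_iUnion, Finset.mem_coe,
      Finset.mem_range, mem_lvl]
    constructor
    · intro h; exact ⟨rank x, by omega, rfl⟩
    · rintro ⟨s, hs, rfl⟩; omega
  rw [hset, finsum_mem_coe_finset,
    Finset.sum_biUnion (fun s _ s' _ h => disj_lvl F h)]
  have hinner : ∀ s ∈ Finset.range (n+1),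
      ∑ x ∈ lvl F s, μ zero x * t ^ (n - rank x)
        = (F s : ℤ) * (m F s * t ^ (n - s)) := by
    intro s _
    rw [← sum_const_lvl F s (m F s * t ^ (n-s))]
    refine Finset.sum_congr rfl fun x hx => ?_
    rw [mem_lvl] at hx
    rw [key s x hx, hx]
  rw [Finset.sum_congr rfl hinner, Finset.sum_range_succ']
  have h0 : (F 0 : ℤ) * (m F 0 * t ^ (n - 0)) = t ^ n := by
    simp [m, hF0]
  rw [h0, add_comm]
  congr 1
  rw [show Finset.Icc 1 n = Finset.Ico 1 (n+1) from (Finset.Ico_add_one_right_eq_Icc 1 n).symm,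
    Finset.sum_Ico_eq_sum_range]
  simp only [Nat.add_sub_cancel]
  refine Finset.sum_congr rfl fun i hi => ?_
  rw [show 1 + i = i + 1 by omega]
  simp only [m, show i + 1 - 1 = i from rfl]
  ring
end
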